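/- Fix integers n ≥ 3 and 1 ≤ j ≤ n. Let G be the bipartite double cover of K_n together with one additional vertex adjacent to the vertices 1,…,j in each of the two copies of {1,…,n}, and let H be two disjoint copies of K_n together with one additional vertex adjacent to j fixed vertices in each copy. Then G and H are singularly cospectral but not cospectral. -/

import Mathlib

open Matrix Polynomial

/-- The real adjacency matrix of a finite simple graph. -/
noncomputable def SimpleGraph.adjMat {V : Type*} [Fintype V] (G : SimpleGraph V) :
    Matrix V V ℝ :=
  letI := Classical.decRel G.Adj
  G.adjMatrix ℝ

/-- The multiset of eigenvalues of the adjacency matrix, counted with multiplicity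
(the roots of the characteristic polynomial). -/
noncomputable def SimpleGraph.eigMultiset {V : Type*} [Fintype V] [DecidableEq V]
    (G : SimpleGraph V) : Multiset ℝ :=
  G.adjMat.charpoly.roots

/-- The multiset of nonzero singular values of a graph, counted with multiplicity:
the nonzero absolute values of the eigenvalues of its adjacency matrix. -/
noncomputable def SimpleGraph.nzSingVals {V : Type*} [Fintype V] [DecidableEq V]
    (G : SimpleGraph V) : Multiset ℝ :=
  (G.eigMultiset.map (fun x => |x|)).filter (fun x => x ≠ 0)

/-- Two graphs are singularly cospectral if their multisets of nonzero singular
values (with multiplicities) coincide. -/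
def SingularlyCospectral {V W : Type*} [Fintype V] [DecidableEq V] [Fintype W] [DecidableEq W]
    (G : SimpleGraph V) (H : SimpleGraph W) : Prop :=
  G.nzSingVals = H.nzSingVals

/-- The bipartite double cover of the complete graph `K_n` (vertex `i` in one copy of
`Fin n` adjacent to vertex `i'` in the other copy iff `i ≠ i'`) together with one
additional vertex (the vertex `none`) adjacent exactly to the first `j` vertices of
each of the two copies. -/
def doubleCoverCompleteWithApex (n j : ℕ) : SimpleGraph (Option (Fin n ⊕ Fin n)) where
  Adj x y :=
    (∃ a b : Fin n, a ≠ b ∧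
      ((x = some (Sum.inl a) ∧ y = some (Sum.inr b)) ∨
       (x = some (Sum.inr a) ∧ y = some (Sum.inl b)))) ∨
    (∃ a : Fin n, (a : ℕ) < j ∧
      ((x = none ∧ (y = some (Sum.inl a) ∨ y = some (Sum.inr a))) ∨
       (y = none ∧ (x = some (Sum.inl a) ∨ x = some (Sum.inr a)))))
  symm := by
    constructor
    rintro x y (⟨a, b, hab, (⟨hx, hy⟩ | ⟨hx, hy⟩)⟩ | ⟨a, ha, h⟩)
    · exact Or.inl ⟨b, a, hab.symm, Or.inr ⟨hy, hx⟩⟩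
    · exact Or.inl ⟨b, a, hab.symm, Or.inl ⟨hy, hx⟩⟩
    · exact Or.inr ⟨a, ha, by tauto⟩
  loopless := by
    constructor
    rintro x (⟨a, b, hab, (⟨hx, hy⟩ | ⟨hx, hy⟩)⟩ | ⟨a, ha, (⟨hx, hy⟩ | ⟨hx, hy⟩)⟩) <;>
      subst hx <;> simp_all

/-- Two disjoint copies of the complete graph `K_n` together with one additional vertex
(the vertex `none`) adjacent exactly to the vertices of `S₁` in the first copy and to
the vertices of `S₂` in the second copy. -/
def twoCompleteWithApex (n : ℕ) (S₁ S₂ : Finset (Fin n)) :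
    SimpleGraph (Option (Fin n ⊕ Fin n)) where
  Adj x y := x ≠ y ∧
    ((∃ a b : Fin n, x = some (Sum.inl a) ∧ y = some (Sum.inl b)) ∨
     (∃ a b : Fin n, x = some (Sum.inr a) ∧ y = some (Sum.inr b)) ∨
     (∃ a : Fin n,
       (a ∈ S₁ ∧ ((x = none ∧ y = some (Sum.inl a)) ∨ (y = none ∧ x = some (Sum.inl a)))) ∨
       (a ∈ S₂ ∧ ((x = none ∧ y = some (Sum.inr a)) ∨ (y = none ∧ x = some (Sum.inr a))))))
  symm := by
    constructor
    rintro x y ⟨hne, h⟩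
    refine ⟨hne.symm, ?_⟩
    obtain (⟨a, b, hx, hy⟩ | ⟨a, b, hx, hy⟩ | ⟨a, h⟩) := h
    · exact Or.inl ⟨b, a, hy, hx⟩
    · exact Or.inr (Or.inl ⟨b, a, hy, hx⟩)
    · exact Or.inr (Or.inr ⟨a, by tauto⟩)
  loopless := by constructor; rintro x ⟨hne, -⟩; exact hne rfl


namespace SCAux


variable {m : Type*} [Fintype m] [DecidableEq m]

lemma charpoly_diagonal (d : m → ℝ) :
    (Matrix.diagonal d).charpoly = ∏ i, (X - C (d i)) := by
  have h : charmatrix (Matrix.diagonal d) = Matrix.diagonal fun i => (X : ℝ[X]) - C (d i) := by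
    refine Matrix.ext fun i k => ?_
    by_cases h : i = k
    · subst h; rw [charmatrix_apply_eq]; simp
    · rw [charmatrix_apply_ne _ _ _ h, Matrix.diagonal_apply_ne _ h,
        Matrix.diagonal_apply_ne _ h, map_zero, neg_zero]
  rw [Matrix.charpoly, h, Matrix.det_diagonal]

lemma roots_charpoly_diagonal (d : m → ℝ) :
    (Matrix.diagonal d).charpoly.roots = Finset.univ.val.map d := by
  have hp : (∏ i, ((X : ℝ[X]) - C (d i)))
      = (Multiset.map (fun a : ℝ => X - C a) (Finset.univ.val.map d)).prod := by
    rw [Multiset.map_map, Finset.prod_eq_multiset_prod]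
    rfl
  rw [charpoly_diagonal, hp, Polynomial.roots_multiset_prod_X_sub_C]

lemma charpoly_units_conj (U : (Matrix m m ℝ)ˣ) (N : Matrix m m ℝ) :
    ((U : Matrix m m ℝ) * N * (↑U⁻¹ : Matrix m m ℝ)).charpoly = N.charpoly := by
  set f : Matrix m m ℝ →+* Matrix m m ℝ[X] := (C : ℝ →+* ℝ[X]).mapMatrix with hf
  have h1 : f ↑U * f ↑U⁻¹ = 1 := by rw [← _root_.map_mul, Units.mul_inv, _root_.map_one]
  have hcomm : ∀ M : Matrix m m ℝ[X], Matrix.scalar m (X : ℝ[X]) * M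
      = M * Matrix.scalar m (X : ℝ[X]) := fun M =>
    (Matrix.scalar_commute (X : ℝ[X]) (fun r' => Commute.all _ r') M).eq
  have key : charmatrix ((U : Matrix m m ℝ) * N * (↑U⁻¹ : Matrix m m ℝ))
      = f ↑U * charmatrix N * f ↑U⁻¹ := by
    unfold charmatrix
    rw [← hf]
    rw [_root_.map_mul, _root_.map_mul, Matrix.mul_sub, Matrix.sub_mul]
    congr 1
    rw [← hcomm, mul_assoc, h1, mul_one]
  rw [Matrix.charpoly, Matrix.charpoly, key, Matrix.det_mul, Matrix.det_mul,
    mul_right_comm, ← Matrix.det_mul, h1, Matrix.det_one, one_mul]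

lemma herm_decomp (A : Matrix m m ℝ) (hA : A.IsHermitian) :
    ∃ U : (Matrix m m ℝ)ˣ,
      A = (U : Matrix m m ℝ) * Matrix.diagonal hA.eigenvalues * (↑U⁻¹ : Matrix m m ℝ) := by
  set V := (hA.eigenvectorUnitary : Matrix m m ℝ) with hV
  have h2 : V * star V = 1 := (Matrix.mem_unitaryGroup_iff).mp (hA.eigenvectorUnitary).2
  have h1 : star V * V = 1 := (Matrix.mem_unitaryGroup_iff').mp (hA.eigenvectorUnitary).2
  refine ⟨⟨V, star V, h2, h1⟩, ?_⟩
  have := hA.spectral_theorem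
  rw [RCLike.ofReal_real_eq_id, Function.id_comp] at this
  exact this

lemma herm_roots_pow (A : Matrix m m ℝ) (hA : A.IsHermitian) (k : ℕ) :
    (A ^ k).charpoly.roots = Finset.univ.val.map (fun i => hA.eigenvalues i ^ k) := by
  obtain ⟨U, hU⟩ := herm_decomp A hA
  conv_lhs => rw [hU, Units.conj_pow, Matrix.diagonal_pow, charpoly_units_conj,
    roots_charpoly_diagonal]
  rfl

lemma herm_trace_pow (A : Matrix m m ℝ) (hA : A.IsHermitian) (k : ℕ) :
    (A ^ k).trace = ∑ i, hA.eigenvalues i ^ k := by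
  obtain ⟨U, hU⟩ := herm_decomp A hA
  conv_lhs => rw [hU, Units.conj_pow, Matrix.diagonal_pow, Matrix.trace_units_conj,
    Matrix.trace_diagonal]
  rfl

lemma herm_roots_sq (A : Matrix m m ℝ) (hA : A.IsHermitian) :
    (A ^ 2).charpoly.roots = A.charpoly.roots.map (fun x => x ^ 2) := by
  have h1 := herm_roots_pow A hA 1
  simp only [pow_one] at h1
  rw [herm_roots_pow A hA 2, h1, Multiset.map_map]
  rfl

lemma herm_sum_cubes (A : Matrix m m ℝ) (hA : A.IsHermitian) :
    (A.charpoly.roots.map (fun x => x ^ 3)).sum = (A ^ 3).trace := by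
  have h1 := herm_roots_pow A hA 1
  simp only [pow_one] at h1
  rw [herm_trace_pow A hA 3, h1, Multiset.map_map]
  rw [Finset.sum_eq_multiset_sum]
  rfl



noncomputable def Bm (n : ℕ) : Matrix (Fin n) (Fin n) ℝ :=
  Matrix.of fun a b => if a = b then 0 else 1

noncomputable def um (n j : ℕ) : Fin n → ℝ := fun a => if (a : ℕ) < j then 1 else 0

noncomputable def vm (n j : ℕ) : Matrix (Fin n ⊕ Fin n) Unit ℝ :=
  Matrix.of fun x _ => Sum.elim (um n j) (um n j) x

noncomputable def A2 (n : ℕ) : Matrix (Fin n ⊕ Fin n) (Fin n ⊕ Fin n) ℝ :=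
  fromBlocks 0 (Bm n) (Bm n) 0

noncomputable def C2 (n : ℕ) : Matrix (Fin n ⊕ Fin n) (Fin n ⊕ Fin n) ℝ :=
  fromBlocks (Bm n) 0 0 (Bm n)

noncomputable def GB (n j : ℕ) : Matrix ((Fin n ⊕ Fin n) ⊕ Unit) ((Fin n ⊕ Fin n) ⊕ Unit) ℝ :=
  fromBlocks (A2 n) (vm n j) (vm n j)ᵀ 0

noncomputable def HB (n j : ℕ) : Matrix ((Fin n ⊕ Fin n) ⊕ Unit) ((Fin n ⊕ Fin n) ⊕ Unit) ℝ :=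
  fromBlocks (C2 n) (vm n j) (vm n j)ᵀ 0

lemma Bm_transpose (n : ℕ) : (Bm n)ᵀ = Bm n := by
  refine Matrix.ext fun a b => ?_
  simp only [Matrix.transpose_apply, Bm, Matrix.of_apply]
  simp [eq_comm]

lemma A2_transpose (n : ℕ) : (A2 n)ᵀ = A2 n := by
  rw [A2, Matrix.fromBlocks_transpose, Matrix.transpose_zero, Bm_transpose]

lemma C2_transpose (n : ℕ) : (C2 n)ᵀ = C2 n := by
  rw [C2, Matrix.fromBlocks_transpose, Matrix.transpose_zero, Bm_transpose]

lemma GB_herm (n j : ℕ) : (GB n j).IsHermitian := by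
  show (GB n j)ᴴ = GB n j
  rw [Matrix.conjTranspose_eq_transpose_of_trivial, GB, Matrix.fromBlocks_transpose,
    A2_transpose, Matrix.transpose_transpose, Matrix.transpose_zero]

lemma HB_herm (n j : ℕ) : (HB n j).IsHermitian := by
  show (HB n j)ᴴ = HB n j
  rw [Matrix.conjTranspose_eq_transpose_of_trivial, HB, Matrix.fromBlocks_transpose,
    C2_transpose, Matrix.transpose_transpose, Matrix.transpose_zero]

lemma A2_mul_vm (n j : ℕ) : A2 n * vm n j = C2 n * vm n j := by
  refine Matrix.ext fun x y => ?_
  cases x with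
  | inl a =>
    simp [A2, C2, Matrix.mul_apply, Fintype.sum_sum_type, vm]
  | inr a =>
    simp [A2, C2, Matrix.mul_apply, Fintype.sum_sum_type, vm]

lemma vmT_mul_A2 (n j : ℕ) : (vm n j)ᵀ * A2 n = (vm n j)ᵀ * C2 n := by
  have h := congrArg Matrix.transpose (A2_mul_vm n j)
  rw [Matrix.transpose_mul, Matrix.transpose_mul, A2_transpose, C2_transpose] at h
  exact h

lemma A2_sq (n : ℕ) : A2 n * A2 n = C2 n * C2 n := by
  rw [A2, C2, Matrix.fromBlocks_multiply, Matrix.fromBlocks_multiply]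
  simp

lemma GB_sq (n j : ℕ) : GB n j ^ 2 = HB n j ^ 2 := by
  rw [pow_two, pow_two, GB, HB, Matrix.fromBlocks_multiply, Matrix.fromBlocks_multiply,
    A2_sq, A2_mul_vm, vmT_mul_A2]

lemma trace_fromBlocks' {p q : Type*} [Fintype p] [Fintype q]
    (A : Matrix p p ℝ) (B : Matrix p q ℝ) (C : Matrix q p ℝ) (D : Matrix q q ℝ) :
    (fromBlocks A B C D).trace = A.trace + D.trace := by
  simp [Matrix.trace, Fintype.sum_sum_type]

lemma trace_cube {p q : Type*} [Fintype p] [Fintype q] [DecidableEq p] [DecidableEq q]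
    (W : Matrix p p ℝ) (v : Matrix p q ℝ) :
    ((fromBlocks W v vᵀ 0) ^ 3).trace
      = (W * W * W).trace + 3 * (vᵀ * (W * v)).trace := by
  rw [pow_succ, pow_two, Matrix.fromBlocks_multiply, Matrix.fromBlocks_multiply,
    trace_fromBlocks']
  simp only [Matrix.mul_zero, Matrix.zero_mul, add_zero, zero_add, Matrix.add_mul,
    Matrix.mul_zero, Matrix.trace_add]
  have h1 : (v * vᵀ * W).trace = (vᵀ * (W * v)).trace := by
    rw [← Matrix.trace_mul_cycle, Matrix.mul_assoc]
  have h2 : (W * v * vᵀ).trace = (vᵀ * (W * v)).trace := by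
    rw [Matrix.trace_mul_comm]
  have h3 : (vᵀ * W * v).trace = (vᵀ * (W * v)).trace := by rw [Matrix.mul_assoc]
  rw [h1, h2, h3]
  ring

lemma trace_A2_cube (n : ℕ) : (A2 n * A2 n * A2 n).trace = 0 := by
  rw [A2, Matrix.fromBlocks_multiply, Matrix.fromBlocks_multiply, trace_fromBlocks']
  simp

lemma trace_C2_cube (n : ℕ) : (C2 n * C2 n * C2 n).trace = 2 * (Bm n * Bm n * Bm n).trace := by
  rw [C2, Matrix.fromBlocks_multiply, Matrix.fromBlocks_multiply, trace_fromBlocks']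
  simp only [Matrix.mul_zero, Matrix.zero_mul, add_zero, zero_add]
  ring

noncomputable def Jm (n : ℕ) : Matrix (Fin n) (Fin n) ℝ := Matrix.of fun _ _ => 1

lemma Jm_mul_Jm (n : ℕ) : Jm n * Jm n = (n : ℝ) • Jm n := by
  refine Matrix.ext fun a b => ?_
  simp [Jm, Matrix.mul_apply]

lemma Bm_eq (n : ℕ) : Bm n = Jm n - 1 := by
  refine Matrix.ext fun a b => ?_
  by_cases h : a = b <;> simp [Bm, Jm, Matrix.one_apply, h]

lemma trace_Jm (n : ℕ) : (Jm n).trace = n := by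
  simp [Matrix.trace, Jm, Matrix.diag]

lemma trace_Bm_cube (n : ℕ) :
    (Bm n * Bm n * Bm n).trace = (n : ℝ) ^ 3 - 3 * (n : ℝ) ^ 2 + 2 * (n : ℝ) := by
  have e3 : Bm n * Bm n * Bm n = ((n : ℝ) ^ 2 - 3 * (n : ℝ) + 3) • Jm n - 1 := by
    rw [Bm_eq]
    have expand : (Jm n - 1) * (Jm n - 1) * (Jm n - 1)
        = Jm n * Jm n * Jm n - (3 : ℕ) • (Jm n * Jm n) + (3 : ℕ) • Jm n - 1 := by
      noncomm_ring
    rw [expand, Jm_mul_Jm, Matrix.smul_mul, Jm_mul_Jm]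
    module
  rw [e3, Matrix.trace_sub, Matrix.trace_smul, trace_Jm, Matrix.trace_one]
  simp only [smul_eq_mul, Fintype.card_fin]
  ring

lemma trace_GB_cube (n j : ℕ) :
    ((GB n j) ^ 3).trace = 3 * ((vm n j)ᵀ * (A2 n * vm n j)).trace := by
  rw [GB, trace_cube, trace_A2_cube, zero_add]

lemma trace_HB_cube (n j : ℕ) :
    ((HB n j) ^ 3).trace = 2 * ((n : ℝ) ^ 3 - 3 * (n : ℝ) ^ 2 + 2 * (n : ℝ))
      + 3 * ((vm n j)ᵀ * (A2 n * vm n j)).trace := by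
  rw [HB, trace_cube, trace_C2_cube, trace_Bm_cube, ← A2_mul_vm]

lemma adjG_eq (n j : ℕ) :
    (doubleCoverCompleteWithApex n j).adjMat
      = (GB n j).reindex (Equiv.optionEquivSumPUnit (Fin n ⊕ Fin n)).symm
          (Equiv.optionEquivSumPUnit (Fin n ⊕ Fin n)).symm := by
  refine Matrix.ext fun x y => ?_
  simp only [SimpleGraph.adjMat, SimpleGraph.adjMatrix_apply, Matrix.reindex_apply,
    Matrix.submatrix_apply, Equiv.symm_symm]
  rcases x with _ | (a | a) <;> rcases y with _ | (b | b) <;>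
    simp [doubleCoverCompleteWithApex, GB, A2, vm, um, Bm, Matrix.fromBlocks_apply₁₁,
      Matrix.fromBlocks_apply₁₂, Matrix.fromBlocks_apply₂₁, Matrix.fromBlocks_apply₂₂,
      eq_comm, ite_not]



lemma exists_perm (n j : ℕ) (hjn : j ≤ n) (S : Finset (Fin n)) (hS : S.card = j) :
    ∃ σ : Equiv.Perm (Fin n), ∀ a, ((σ a : Fin n) : ℕ) < j ↔ a ∈ S := by
  classical
  set T : Finset (Fin n) := Finset.attachFin (Finset.range j)
      (fun m hm => lt_of_lt_of_le (Finset.mem_range.mp hm) hjn) with hT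
  have hTmem : ∀ a : Fin n, a ∈ T ↔ (a : ℕ) < j := by
    intro a; simp [hT, Finset.mem_attachFin, Finset.mem_range]
  have hTcard : T.card = j := by simp [hT, Finset.card_attachFin]
  have h1 : Fintype.card {x : Fin n // x ∈ S} = Fintype.card {x : Fin n // x ∈ T} := by
    simp only [Fintype.card_coe]
    rw [hS, hTcard]
  have h2 : Fintype.card {x : Fin n // ¬ x ∈ S} = Fintype.card {x : Fin n // ¬ x ∈ T} := by
    rw [Fintype.card_subtype_compl, Fintype.card_subtype_compl, h1]
  refine ⟨Equiv.subtypeCongr (Fintype.equivOfCardEq h1) (Fintype.equivOfCardEq h2), fun a => ?_⟩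
  by_cases h : a ∈ S
  · have hv : Equiv.subtypeCongr (Fintype.equivOfCardEq h1) (Fintype.equivOfCardEq h2) a
        = ↑(Fintype.equivOfCardEq h1 ⟨a, h⟩) := by
      simp [Equiv.subtypeCongr, h]
    rw [hv]
    simpa [h] using (hTmem _).mp (Fintype.equivOfCardEq h1 ⟨a, h⟩).2
  · have hv : Equiv.subtypeCongr (Fintype.equivOfCardEq h1) (Fintype.equivOfCardEq h2) a
        = ↑(Fintype.equivOfCardEq h2 ⟨a, h⟩) := by
      simp [Equiv.subtypeCongr, h]
    rw [hv]
    have := (Fintype.equivOfCardEq h2 ⟨a, h⟩).2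
    simp only [hTmem] at this
    simp [h, this]

lemma adjH_eq (n j : ℕ) (S₁ S₂ : Finset (Fin n)) (σ₁ σ₂ : Equiv.Perm (Fin n))
    (hσ₁ : ∀ a, ((σ₁ a : Fin n) : ℕ) < j ↔ a ∈ S₁)
    (hσ₂ : ∀ a, ((σ₂ a : Fin n) : ℕ) < j ↔ a ∈ S₂) :
    (twoCompleteWithApex n S₁ S₂).adjMat
      = (HB n j).reindex
          ((Equiv.optionEquivSumPUnit (Fin n ⊕ Fin n)).trans
            (Equiv.sumCongr (Equiv.sumCongr σ₁ σ₂) (Equiv.refl Unit))).symm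
          ((Equiv.optionEquivSumPUnit (Fin n ⊕ Fin n)).trans
            (Equiv.sumCongr (Equiv.sumCongr σ₁ σ₂) (Equiv.refl Unit))).symm := by
  refine Matrix.ext fun x y => ?_
  simp only [SimpleGraph.adjMat, SimpleGraph.adjMatrix_apply, Matrix.reindex_apply,
    Matrix.submatrix_apply, Equiv.symm_symm, Equiv.trans_apply]
  rcases x with _ | (a | a) <;> rcases y with _ | (b | b) <;>
    simp [twoCompleteWithApex, HB, C2, vm, um, Bm, Matrix.fromBlocks_apply₁₁,
      Matrix.fromBlocks_apply₁₂, Matrix.fromBlocks_apply₂₁, Matrix.fromBlocks_apply₂₂,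
      hσ₁, hσ₂, eq_comm, ite_not]


end SCAux

/-- Let `n ≥ 3` and `1 ≤ j ≤ n`.  Let `G` be the bipartite double cover of `K_n`
together with one additional vertex adjacent to the vertices `1, …, j` in each of the
two copies, and let `H` be two disjoint copies of `K_n` together with one additional
vertex adjacent to `j` fixed vertices in each copy.  Then `G` and `H` are singularly
cospectral but not cospectral. -/
theorem doubleCoverCompleteWithApex_singularlyCospectral_not_cospectral
    (n j : ℕ) (hn : 3 ≤ n) (hj1 : 1 ≤ j) (hjn : j ≤ n)
    (S₁ S₂ : Finset (Fin n)) (hS₁ : S₁.card = j) (hS₂ : S₂.card = j) :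
    SingularlyCospectral (doubleCoverCompleteWithApex n j) (twoCompleteWithApex n S₁ S₂) ∧
    (doubleCoverCompleteWithApex n j).eigMultiset ≠
      (twoCompleteWithApex n S₁ S₂).eigMultiset := by
  classical
  obtain ⟨σ₁, hσ₁⟩ := SCAux.exists_perm n j hjn S₁ hS₁
  obtain ⟨σ₂, hσ₂⟩ := SCAux.exists_perm n j hjn S₂ hS₂
  have hGchar : (doubleCoverCompleteWithApex n j).adjMat.charpoly
      = (SCAux.GB n j).charpoly := by
    rw [SCAux.adjG_eq n j]; exact Matrix.charpoly_reindex _ _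
  have hHchar : (twoCompleteWithApex n S₁ S₂).adjMat.charpoly
      = (SCAux.HB n j).charpoly := by
    rw [SCAux.adjH_eq n j S₁ S₂ σ₁ σ₂ hσ₁ hσ₂]; exact Matrix.charpoly_reindex _ _
  have sqroots : (SCAux.GB n j).charpoly.roots.map (fun x => x ^ 2)
      = (SCAux.HB n j).charpoly.roots.map (fun x => x ^ 2) := by
    rw [← SCAux.herm_roots_sq _ (SCAux.GB_herm n j),
      ← SCAux.herm_roots_sq _ (SCAux.HB_herm n j), SCAux.GB_sq]
  constructor
  · unfold SingularlyCospectral SimpleGraph.nzSingVals SimpleGraph.eigMultiset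
    rw [hGchar, hHchar]
    have e1 : ∀ M : Multiset ℝ, M.map (fun x => |x|)
        = (M.map (fun x => x ^ 2)).map Real.sqrt := by
      intro M
      rw [Multiset.map_map]
      exact Multiset.map_congr rfl fun x _ => (Real.sqrt_sq_eq_abs x).symm
    have habs : (SCAux.GB n j).charpoly.roots.map (fun x => |x|)
        = (SCAux.HB n j).charpoly.roots.map (fun x => |x|) := by
      rw [e1, e1, sqroots]
    rw [habs]
  · intro h
    unfold SimpleGraph.eigMultiset at h
    rw [hGchar, hHchar] at h
    have hsum : ((SCAux.GB n j).charpoly.roots.map (fun x => x ^ 3)).sum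
        = ((SCAux.HB n j).charpoly.roots.map (fun x => x ^ 3)).sum := by rw [h]
    rw [SCAux.herm_sum_cubes _ (SCAux.GB_herm n j),
      SCAux.herm_sum_cubes _ (SCAux.HB_herm n j),
      SCAux.trace_GB_cube, SCAux.trace_HB_cube] at hsum
    have hn' : (3 : ℝ) ≤ (n : ℝ) := by exact_mod_cast hn
    nlinarith [hsum, hn']
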